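/- Let ρ be a nondegenerate density matrix on a finite-dimensional Hilbert space K and define the scalar product (A|B)_ρ := Tr(ρ^{1/2} A* ρ^{1/2} B) on B(K). If K is self-adjoint with ρ = e^{-βK}/Tr e^{-βK}, ν ∈ B(K, K ⊗ h) satisfies ν K = (K⊗1 + 1⊗Y)ν for a self-adjoint Y on h, and Tr_h(ν A ν*) = ν*(A ⊗ e^{-βY})ν for all A ∈ B(K), then the map M₁(A) := ν*(A ⊗ 1)ν is self-adjoint with respect to (·|·)_ρ. -/

import Mathlib

open Matrix ComplexConjugate MeasureTheory
open scoped Kronecker ComplexOrder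

noncomputable section

/-- Ampliation `Φ ⊗ id_k` of a superoperator, acting on `B(K ⊗ ℂᵏ)`. -/
def amp {n m k : Type*} [Fintype n] [Fintype m] [Fintype k]
    (Φ : Matrix n n ℂ → Matrix m m ℂ) :
    Matrix (n × k) (n × k) ℂ → Matrix (m × k) (m × k) ℂ :=
  fun M => Matrix.of fun p q => Φ (Matrix.of fun a b => M (a, p.2) (b, q.2)) p.1 q.1

/-- A map between matrix algebras is positive if it preserves positive semidefiniteness. -/
def IsPosMap {n m : Type*} [Fintype n] [Fintype m]
    (Φ : Matrix n n ℂ → Matrix m m ℂ) : Prop :=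
  ∀ A : Matrix n n ℂ, A.PosSemidef → (Φ A).PosSemidef

/-- Complete positivity: all ampliations `Φ ⊗ id_k` are positive. -/
def IsCP {n m : Type*} [Fintype n] [Fintype m]
    (Φ : Matrix n n ℂ → Matrix m m ℂ) : Prop :=
  ∀ k : ℕ, IsPosMap (amp (k := Fin k) Φ)

/-- Action of a supermatrix (matrix on index `n × n`) as a linear map on `B(ℂⁿ)`. -/
def supAct {n : Type*} [Fintype n]
    (L : Matrix (n × n) (n × n) ℂ) (A : Matrix n n ℂ) : Matrix n n ℂ :=
  Matrix.of fun i j => ∑ p : n × n, L (i, j) p * A p.1 p.2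

/-- The standard (antilinear in the first slot) inner product on `ι → ℂ`. -/
def cinner {ι : Type*} [Fintype ι] (v w : ι → ℂ) : ℂ := ∑ i, conj (v i) * w i

/-- Elementary tensor of two vectors. -/
def tvec {n d : Type*} (φ : n → ℂ) (w : d → ℂ) : n × d → ℂ := fun p => φ p.1 * w p.2

/-- Contraction `(φ| ⊗ 1 : K ⊗ h → h`. -/
def contrL {n d : Type*} [Fintype n] (φ : n → ℂ) (x : n × d → ℂ) : d → ℂ :=
  fun a => ∑ i, conj (φ i) * x (i, a)

/-- Partial trace over the second tensor factor. -/
def ptr {n d : Type*} [Fintype d] (M : Matrix (n × d) (n × d) ℂ) : Matrix n n ℂ :=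
  Matrix.of fun i j => ∑ a, M (i, a) (j, a)

section Aux
open NormedSpace
attribute [local instance] Matrix.linftyOpNormedRing Matrix.linftyOpNormedAlgebra
  Matrix.linftyOpNormedAddCommGroup

variable {n m d : Type*} [Fintype n] [DecidableEq n] [Fintype m] [DecidableEq m]
  [Fintype d] [DecidableEq d]

lemma semiconj_exp (ν : Matrix m n ℂ) (A : Matrix n n ℂ) (B : Matrix m m ℂ)
    (h : ν * A = B * ν) : ν * exp A = exp B * ν := by
  have hpow : ∀ j : ℕ, ν * A ^ j = B ^ j * ν := by
    intro j; induction j with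
    | zero => simp
    | succ j ih => rw [pow_succ, ← Matrix.mul_assoc, ih, Matrix.mul_assoc, h, ← Matrix.mul_assoc, ← pow_succ]
  let L : Matrix n n ℂ →L[ℂ] Matrix m n ℂ :=
    LinearMap.toContinuousLinearMap
      { toFun := fun X => ν * X
        map_add' := fun X Y => Matrix.mul_add _ _ _
        map_smul' := fun c X => by simp [Matrix.mul_smul] }
  let R : Matrix m m ℂ →L[ℂ] Matrix m n ℂ :=
    LinearMap.toContinuousLinearMap
      { toFun := fun X => X * ν
        map_add' := fun X Y => Matrix.add_mul _ _ _
        map_smul' := fun c X => by simp [Matrix.smul_mul] }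
  have h1 : ν * exp A = L (exp A) := rfl
  have h2 : exp B * ν = R (exp B) := rfl
  rw [h1, h2, exp_eq_tsum ℂ, exp_eq_tsum ℂ,
    L.map_tsum (expSeries_summable' (𝕂 := ℂ) A),
    R.map_tsum (expSeries_summable' (𝕂 := ℂ) B)]
  refine tsum_congr fun j => ?_
  show ν * (((j.factorial : ℂ))⁻¹ • A ^ j) = (((j.factorial : ℂ))⁻¹ • B ^ j) * ν
  rw [Matrix.mul_smul, hpow, Matrix.smul_mul]

def kronRone (d : Type*) [Fintype d] [DecidableEq d] :
    Matrix n n ℂ →ₐ[ℂ] Matrix (n × d) (n × d) ℂ where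
  toFun A := A ⊗ₖ (1 : Matrix d d ℂ)
  map_one' := Matrix.one_kronecker_one
  map_mul' A B := by rw [← Matrix.mul_kronecker_mul, one_mul]
  map_zero' := Matrix.zero_kronecker 1
  map_add' A B := Matrix.add_kronecker A B 1
  commutes' r := by
    show (algebraMap ℂ (Matrix n n ℂ) r) ⊗ₖ (1 : Matrix d d ℂ) = algebraMap ℂ _ r
    rw [Algebra.algebraMap_eq_smul_one, Algebra.algebraMap_eq_smul_one,
      Matrix.smul_kronecker, Matrix.one_kronecker_one]

def kronLone (n : Type*) [Fintype n] [DecidableEq n] :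
    Matrix d d ℂ →ₐ[ℂ] Matrix (n × d) (n × d) ℂ where
  toFun B := (1 : Matrix n n ℂ) ⊗ₖ B
  map_one' := Matrix.one_kronecker_one
  map_mul' A B := by rw [← Matrix.mul_kronecker_mul, one_mul]
  map_zero' := by ext ⟨i,a⟩ ⟨j,b⟩; simp
  map_add' A B := by ext ⟨i,a⟩ ⟨j,b⟩; simp [Matrix.kroneckerMap_apply, mul_add]
  commutes' r := by
    show (1 : Matrix n n ℂ) ⊗ₖ (algebraMap ℂ (Matrix d d ℂ) r) = algebraMap ℂ _ r
    rw [Algebra.algebraMap_eq_smul_one, Algebra.algebraMap_eq_smul_one,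
      Matrix.kronecker_smul, Matrix.one_kronecker_one]

lemma exp_kron_one (A : Matrix n n ℂ) :
    exp (A ⊗ₖ (1 : Matrix d d ℂ)) = exp A ⊗ₖ (1 : Matrix d d ℂ) := by
  have := map_exp (kronRone (n := n) d)
    (LinearMap.continuous_of_finiteDimensional (kronRone (n := n) d).toLinearMap) A
  exact this.symm

lemma exp_one_kron (B : Matrix d d ℂ) :
    exp ((1 : Matrix n n ℂ) ⊗ₖ B) = (1 : Matrix n n ℂ) ⊗ₖ exp B := by
  have := map_exp (kronLone (d := d) n)
    (LinearMap.continuous_of_finiteDimensional (kronLone (d := d) n).toLinearMap) B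
  exact this.symm

lemma kron_conjT (A : Matrix n n ℂ) (B : Matrix d d ℂ) : (A ⊗ₖ B)ᴴ = Aᴴ ⊗ₖ Bᴴ := by
  ext ⟨i, a⟩ ⟨j, b⟩
  simp [Matrix.conjTranspose_apply, Matrix.kroneckerMap_apply]

lemma trace_ptr_mul (M : Matrix (n × d) (n × d) ℂ) (B : Matrix n n ℂ) :
    (ptr M * B).trace = (M * (B ⊗ₖ (1 : Matrix d d ℂ))).trace := by
  simp only [Matrix.trace, Matrix.diag, Matrix.mul_apply, ptr, Matrix.of_apply,
    Matrix.kroneckerMap_apply, Matrix.one_apply, Fintype.sum_prod_type,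
    mul_ite, mul_one, mul_zero, Finset.sum_ite_eq', Finset.mem_univ, if_true]
  refine Finset.sum_congr rfl fun i _ => ?_
  simp_rw [Finset.sum_mul]
  exact Finset.sum_comm

end Aux

set_option maxHeartbeats 1000000 in
/-- Detailed balance: under the intertwining relation and the partial-trace condition,
`M₁(A) = ν*(A⊗1)ν` is self-adjoint for the scalar product
`(A|B)_ρ = Tr(ρ^{1/2} A* ρ^{1/2} B)` with `ρ = e^{−βK}/Tr e^{−βK}`. -/
theorem M1_selfadjoint_dbc {n d : ℕ} (β : ℝ) (hβ : 0 < β)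
    (K : Matrix (Fin n) (Fin n) ℂ) (hK : K.IsHermitian)
    (Y : Matrix (Fin d) (Fin d) ℂ) (hY : Y.IsHermitian)
    (ν : Matrix (Fin n × Fin d) (Fin n) ℂ)
    (hint : ν * K = (K ⊗ₖ (1 : Matrix (Fin d) (Fin d) ℂ)
        + (1 : Matrix (Fin n) (Fin n) ℂ) ⊗ₖ Y) * ν)
    (hptr : ∀ A : Matrix (Fin n) (Fin n) ℂ,
      ptr (ν * A * νᴴ) = νᴴ * (A ⊗ₖ NormedSpace.exp ((-(β : ℂ)) • Y)) * ν) :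
    ∀ A B : Matrix (Fin n) (Fin n) ℂ,
      ((NormedSpace.exp ((-(β : ℂ)) • K)).trace)⁻¹ *
        (NormedSpace.exp ((-(β : ℂ) / 2) • K) *
          (νᴴ * (A ⊗ₖ (1 : Matrix (Fin d) (Fin d) ℂ)) * ν)ᴴ *
          NormedSpace.exp ((-(β : ℂ) / 2) • K) * B).trace
      = ((NormedSpace.exp ((-(β : ℂ)) • K)).trace)⁻¹ *
        (NormedSpace.exp ((-(β : ℂ) / 2) • K) * Aᴴ *
          NormedSpace.exp ((-(β : ℂ) / 2) • K) *
          (νᴴ * (B ⊗ₖ (1 : Matrix (Fin d) (Fin d) ℂ)) * ν)).trace := by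
  intro A B
  congr 1
  set c : ℂ := -(β : ℂ) / 2 with hc
  set e := NormedSpace.exp (c • K) with he_def
  set f := NormedSpace.exp (c • Y) with hf_def
  have hcc : star c = c := by simp [hc, Complex.star_def, Complex.conj_ofReal]
  have he : eᴴ = e := by
    rw [he_def, ← Matrix.exp_conjTranspose, Matrix.conjTranspose_smul, hcc, hK.eq]
  have hf : fᴴ = f := by
    rw [hf_def, ← Matrix.exp_conjTranspose, Matrix.conjTranspose_smul, hcc, hY.eq]
  have hff : f * f = NormedSpace.exp ((-(β : ℂ)) • Y) := by
    have hsum : (-(β : ℂ)) • Y = c • Y + c • Y := by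
      rw [← add_smul]; congr 1; rw [hc]; ring
    rw [hsum, Matrix.exp_add_of_commute _ _ (Commute.refl _)]
  have hcomm : Commute ((c • K) ⊗ₖ (1 : Matrix (Fin d) (Fin d) ℂ))
      ((1 : Matrix (Fin n) (Fin n) ℂ) ⊗ₖ (c • Y)) := by
    unfold Commute SemiconjBy
    rw [← Matrix.mul_kronecker_mul, ← Matrix.mul_kronecker_mul, one_mul, mul_one,
      one_mul, mul_one]
  have hE : NormedSpace.exp ((c • K) ⊗ₖ (1 : Matrix (Fin d) (Fin d) ℂ)
      + (1 : Matrix (Fin n) (Fin n) ℂ) ⊗ₖ (c • Y)) = e ⊗ₖ f := by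
    rw [Matrix.exp_add_of_commute _ _ hcomm, exp_kron_one, exp_one_kron,
      ← Matrix.mul_kronecker_mul, mul_one, one_mul]
  have hν : ν * (c • K) = ((c • K) ⊗ₖ (1 : Matrix (Fin d) (Fin d) ℂ)
      + (1 : Matrix (Fin n) (Fin n) ℂ) ⊗ₖ (c • Y)) * ν := by
    rw [Matrix.mul_smul, hint, ← Matrix.smul_mul]
    congr 1
    rw [smul_add, Matrix.smul_kronecker, Matrix.kronecker_smul]
  have hsemi : ν * e = (e ⊗ₖ f) * ν := by
    rw [he_def, ← hE]
    exact semiconj_exp ν _ _ hν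
  have heν : e * νᴴ = νᴴ * (e ⊗ₖ f) := by
    calc e * νᴴ = (ν * eᴴ)ᴴ := by
          rw [Matrix.conjTranspose_mul, Matrix.conjTranspose_conjTranspose]
      _ = (ν * e)ᴴ := by rw [he]
      _ = ((e ⊗ₖ f) * ν)ᴴ := by rw [hsemi]
      _ = νᴴ * (e ⊗ₖ f)ᴴ := Matrix.conjTranspose_mul _ _
      _ = νᴴ * (e ⊗ₖ f) := by rw [kron_conjT, he, hf]
  have hL : e * (νᴴ * (A ⊗ₖ (1 : Matrix (Fin d) (Fin d) ℂ)) * ν)ᴴ * e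
      = ptr (ν * (e * Aᴴ * e) * νᴴ) := by
    have h1 : (νᴴ * (A ⊗ₖ (1 : Matrix (Fin d) (Fin d) ℂ)) * ν)ᴴ
        = νᴴ * (Aᴴ ⊗ₖ (1 : Matrix (Fin d) (Fin d) ℂ)) * ν := by
      rw [Matrix.conjTranspose_mul, Matrix.conjTranspose_mul,
        Matrix.conjTranspose_conjTranspose, kron_conjT, Matrix.conjTranspose_one,
        Matrix.mul_assoc]
    rw [h1, hptr, ← hff]
    calc e * (νᴴ * (Aᴴ ⊗ₖ (1 : Matrix (Fin d) (Fin d) ℂ)) * ν) * e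
        = (e * νᴴ) * ((Aᴴ ⊗ₖ (1 : Matrix (Fin d) (Fin d) ℂ)) * (ν * e)) := by
          simp only [Matrix.mul_assoc]
      _ = (νᴴ * (e ⊗ₖ f)) * ((Aᴴ ⊗ₖ (1 : Matrix (Fin d) (Fin d) ℂ)) * ((e ⊗ₖ f) * ν)) := by
          rw [heν, hsemi]
      _ = νᴴ * (((e ⊗ₖ f) * (Aᴴ ⊗ₖ (1 : Matrix (Fin d) (Fin d) ℂ)) * (e ⊗ₖ f)) * ν) := by
          simp only [Matrix.mul_assoc]
      _ = νᴴ * (((e * Aᴴ * e) ⊗ₖ (f * (1 : Matrix (Fin d) (Fin d) ℂ) * f)) * ν) := by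
          rw [← Matrix.mul_kronecker_mul, ← Matrix.mul_kronecker_mul]
      _ = νᴴ * ((e * Aᴴ * e) ⊗ₖ (f * f)) * ν := by
          rw [mul_one, ← Matrix.mul_assoc]
  calc (e * (νᴴ * (A ⊗ₖ (1 : Matrix (Fin d) (Fin d) ℂ)) * ν)ᴴ * e * B).trace
      = (ptr (ν * (e * Aᴴ * e) * νᴴ) * B).trace := by rw [hL]
    _ = ((ν * (e * Aᴴ * e) * νᴴ) * (B ⊗ₖ (1 : Matrix (Fin d) (Fin d) ℂ))).trace :=
        trace_ptr_mul _ _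
    _ = ((e * Aᴴ * e) * (νᴴ * (B ⊗ₖ (1 : Matrix (Fin d) (Fin d) ℂ)) * ν)).trace := by
        rw [Matrix.mul_assoc (ν * (e * Aᴴ * e)) νᴴ, Matrix.trace_mul_comm,
          ← Matrix.mul_assoc, Matrix.trace_mul_comm]
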